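/- For β, γ ∈ (0,1): if γ ≥ 1 − 2^{β−1}, then 1 + (2^β−1)/γ ≥ 2^β; and if γ < 1 − 2^{β−1}, then ((1−γ)/γ)((1−γ)^{−1/(1−β)} − 1)^{1−β} > 2^β. -/

import Mathlib

open Real

theorem stmt11 (β γ : ℝ) (hβ : β ∈ Set.Ioo (0:ℝ) 1) (hγ : γ ∈ Set.Ioo (0:ℝ) 1) :
    (1 - (2:ℝ) ^ (β - 1) ≤ γ → (2:ℝ) ^ β ≤ 1 + ((2:ℝ) ^ β - 1) / γ) ∧
    (γ < 1 - (2:ℝ) ^ (β - 1) →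
      (2:ℝ) ^ β < ((1-γ)/γ) * ((1-γ) ^ (-1/(1-β)) - 1) ^ (1-β)) := by
  obtain ⟨hβ0, hβ1⟩ := hβ
  obtain ⟨hγ0, hγ1⟩ := hγ
  have h2β1 : (1:ℝ) ≤ (2:ℝ) ^ β := by
    calc (1:ℝ) = (2:ℝ) ^ (0:ℝ) := by simp
    _ ≤ (2:ℝ) ^ β := Real.rpow_le_rpow_of_exponent_le one_le_two hβ0.le
  constructor
  · intro _
    have h1 : (2:ℝ) ^ β - 1 ≤ ((2:ℝ) ^ β - 1) / γ := by
      rw [le_div_iff₀ hγ0]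
      nlinarith
    linarith
  · intro hlt
    set b : ℝ := 1 - β with hb
    have hb0 : 0 < b := by simp [hb]; linarith
    have hb1 : b < 1 := by simp [hb]; linarith
    set t : ℝ := 1 - γ with ht
    have ht0 : 0 < t := by linarith
    have ht1 : t < 1 := by linarith
    have htlb : (2:ℝ) ^ (-b) < t := by
      have : (β - 1) = -b := by ring
      rw [← this]; linarith
    set s : ℝ := t ^ (-1/b) with hs
    have hs0 : 0 < s := Real.rpow_pos_of_pos ht0 _
    have hneg : -1/b < 0 := div_neg_of_neg_of_pos (by norm_num) hb0
    have hs1 : 1 < s := by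
      rw [hs]
      exact Real.one_lt_rpow_iff_of_pos ht0 |>.2 (Or.inr ⟨ht1, hneg⟩)
    have hs2 : s < 2 := by
      have h1 : t ^ (-1/b) < ((2:ℝ) ^ (-b)) ^ (-1/b) := by
        exact Real.rpow_lt_rpow_of_neg (by positivity) htlb hneg
      have h2 : ((2:ℝ) ^ (-b)) ^ (-1/b) = 2 := by
        rw [← Real.rpow_mul (by norm_num : (0:ℝ) ≤ 2),
          show -b * (-1/b) = 1 by field_simp, Real.rpow_one]
      rw [hs]; rw [h2] at h1; exact h1
    -- key: t = s ^ (-b)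
    have hts : t = s ^ (-b) := by
      rw [hs, ← Real.rpow_mul ht0.le, show -1/b * -b = 1 by field_simp, Real.rpow_one]
    -- Bernoulli: s^b ≤ 1 + b*(s-1)
    have hbern : s ^ b ≤ 1 + b * (s - 1) := by
      have := rpow_one_add_le_one_add_mul_self (s := s - 1) (by linarith) hb0.le hb1.le
      simpa using this
    have hsb1 : 1 < s ^ b := Real.one_lt_rpow_iff_of_pos hs0 |>.2 (Or.inl ⟨hs1, hb0⟩)
    -- b * 2^(1-b) < 1
    have hkey : b * (2:ℝ) ^ (1 - b) < 1 := by
      have hlog : Real.log b ≤ b - 1 := Real.log_le_sub_one_of_pos hb0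
      have h2 : (2:ℝ) ^ (1 - b) < Real.exp (1 - b) := by
        rw [Real.rpow_def_of_pos (by norm_num)]
        apply Real.exp_lt_exp.2
        have hl2 : Real.log 2 < 1 := by
          have := Real.log_two_lt_d9
          linarith
        nlinarith
      have h3 : Real.exp (1 - b) ≤ 1 / b := by
        rw [le_div_iff₀ hb0]
        have hb' : b ≤ Real.exp (b - 1) := by
          have := Real.add_one_le_exp (b - 1)
          linarith
        calc Real.exp (1 - b) * b ≤ Real.exp (1 - b) * Real.exp (b - 1) :=
              mul_le_mul_of_nonneg_left hb' (Real.exp_pos _).le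
        _ = 1 := by rw [← Real.exp_add]; norm_num
      calc b * (2:ℝ) ^ (1 - b) < b * Real.exp (1 - b) := by
            exact mul_lt_mul_of_pos_left h2 hb0
        _ ≤ b * (1 / b) := mul_le_mul_of_nonneg_left h3 hb0.le
        _ = 1 := by field_simp
    -- (s-1)^(b-1) ≥ 1
    have hsm1 : 0 < s - 1 := by linarith
    have hsm1lt : s - 1 < 1 := by linarith
    have hpow1 : 1 ≤ (s - 1) ^ (b - 1) := by
      rw [show b - 1 = -(1 - b) by ring, Real.rpow_neg hsm1.le, one_le_inv_iff₀]
      constructor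
      · positivity
      · calc (s - 1) ^ (1 - b) ≤ 1 ^ (1 - b) :=
              Real.rpow_le_rpow hsm1.le hsm1lt.le (by linarith)
        _ = 1 := Real.one_rpow _
    -- main inequality: 2^(1-b) * (s^b - 1) < (s-1)^b
    have hmain : (2:ℝ) ^ (1 - b) * (s ^ b - 1) < (s - 1) ^ b := by
      have h1 : (2:ℝ) ^ (1 - b) * (s ^ b - 1) ≤ (2:ℝ) ^ (1 - b) * (b * (s - 1)) := by
        apply mul_le_mul_of_nonneg_left (by linarith) (by positivity)
      have h2 : (2:ℝ) ^ (1 - b) * (b * (s - 1)) < 1 * (s - 1) ^ (b - 1) * (s - 1) := by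
        have : (2:ℝ) ^ (1 - b) * b < 1 * (s - 1) ^ (b - 1) := by
          calc (2:ℝ) ^ (1 - b) * b = b * (2:ℝ) ^ (1 - b) := by ring
          _ < 1 := hkey
          _ ≤ 1 * (s - 1) ^ (b - 1) := by linarith
        nlinarith
      have h3 : 1 * (s - 1) ^ (b - 1) * (s - 1) = (s - 1) ^ b := by
        rw [one_mul, ← Real.rpow_add_one hsm1.ne' (b - 1)]
        norm_num
      calc (2:ℝ) ^ (1 - b) * (s ^ b - 1) ≤ (2:ℝ) ^ (1 - b) * (b * (s - 1)) := h1
        _ < 1 * (s - 1) ^ (b - 1) * (s - 1) := h2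
        _ = (s - 1) ^ b := h3
    -- now convert goal
    have hgoal : ((1-γ)/γ) * ((1-γ) ^ (-1/(1-β)) - 1) ^ (1-β)
        = (t / (1 - t)) * (s - 1) ^ b := by
      rw [hs, ht, hb]; ring_nf
    rw [hgoal]
    have h2β : (2:ℝ) ^ β = (2:ℝ) ^ (1 - b) := by rw [hb]; ring_nf
    rw [h2β]
    have htt : t / (1 - t) = 1 / (s ^ b - 1) := by
      rw [hts, Real.rpow_neg hs0.le]
      field_simp
    rw [htt, div_mul_eq_mul_div, one_mul, lt_div_iff₀ (by linarith)]
    linarith [hmain]
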